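/- As n → ∞, the average-case approximation ratio of mechanism P has limit inferior at least ( ∑_{j=1}^m (E_{t∼D^j}[1/t])^{-1} ) / ( ∑_{j=1}^m t^j_min ): liminf_{n→∞} r_n(P) ≥ (∑_j (E_{t∼D^j}[1/t])^{-1}) / (∑_j t^j_min). -/

import Mathlib

open MeasureTheory ProbabilityTheory Finset Filter Topology

set_option maxHeartbeats 1000000

/-- Social cost of mechanism P on a cost vector `t`:
`SC_P(t) = ∑_k p_k^P t_k = n / (∑_k 1/t_k)` where `p_k^P = (1/t_k) / (∑_i 1/t_i)`. -/
noncomputable def SCP (n : ℕ) (t : Fin n → ℝ) : ℝ :=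
  (n : ℝ) / (∑ k, 1 / t k)

/-- With `m ≥ 1` tasks, costs `X i j ∼ D j` mutually independent, `D j` a
probability distribution on `[tmin j, ∞)` whose CDF is positive just above `tmin j`, the
average-case approximation ratio `r_n(P) = E[(∑_j SC_P(t^j)) / (∑_j min_i t_i^j)]` of
mechanism P satisfies `liminf_{n→∞} r_n(P) ≥ (∑_j (E_{t∼D^j}[1/t])⁻¹) / (∑_j tmin j)`. -/
theorem mechanismP_average_ratio_liminf_ge
    {Ω : Type*} [MeasureSpace Ω] [IsProbabilityMeasure (ℙ : Measure Ω)]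
    (m : ℕ) (hm : 1 ≤ m)
    (tmin : Fin m → ℝ) (htmin : ∀ j, 0 < tmin j)
    (D : Fin m → Measure ℝ) (hprob : ∀ j, IsProbabilityMeasure (D j))
    (hsupp : ∀ j, D j (Set.Iio (tmin j)) = 0)
    (hcdf : ∀ j, ∀ δ : ℝ, 0 < δ → 0 < D j (Set.Iic (tmin j + δ)))
    (X : ℕ → Fin m → Ω → ℝ)
    (hmeas : ∀ i j, Measurable (X i j))
    (hindep : iIndepFun (fun p : ℕ × Fin m => X p.1 p.2) ℙ)
    (hdist : ∀ i j, Measure.map (X i j) ℙ = D j)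
    (r : ℕ → ℝ)
    (hr : ∀ n, r n = ∫ ω, (∑ j, SCP n (fun i : Fin n => X i j ω)) /
        (∑ j, ⨅ i : Fin n, X i j ω) ∂ℙ) :
    (∑ j, (∫ t, 1 / t ∂(D j))⁻¹) / (∑ j, tmin j) ≤ liminf r atTop := by
  classical
  -- a.e. lower bound on each X i j
  have hge : ∀ i j, ∀ᵐ ω ∂(ℙ : Measure Ω), tmin j ≤ X i j ω := by
    intro i j
    have h0 : ℙ (X i j ⁻¹' Set.Iio (tmin j)) = 0 := by
      rw [← Measure.map_apply (hmeas i j) measurableSet_Iio, hdist i j]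
      exact hsupp j
    rw [ae_iff]
    convert h0 using 2
    ext ω; simp [not_le]
  have hgeA : ∀ᵐ ω ∂(ℙ : Measure Ω), ∀ i j, tmin j ≤ X i j ω := by
    rw [ae_all_iff]; intro i; rw [ae_all_iff]; exact hge i
  -- the mean of inverses
  set μ' : Fin m → ℝ := fun j => ∫ ω, (X 0 j ω)⁻¹ ∂ℙ with hμ'
  have hμeq : ∀ j, (∫ t, 1 / t ∂(D j)) = μ' j := by
    intro j
    simp only [one_div]
    rw [← hdist 0 j, integral_map (hmeas 0 j).aemeasurable
      measurable_inv.aestronglyMeasurable]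
  -- integrability of inverses
  have hint : ∀ i j, Integrable (fun ω => (X i j ω)⁻¹) ℙ := by
    intro i j
    refine Integrable.mono' (integrable_const (tmin j)⁻¹)
      ((hmeas i j).inv.aestronglyMeasurable) ?_
    filter_upwards [hge i j] with ω hω
    have h0 : 0 < X i j ω := lt_of_lt_of_le (htmin j) hω
    rw [Real.norm_eq_abs, abs_of_nonneg (by positivity)]
    exact inv_anti₀ (htmin j) hω
  have hμpos : ∀ j, 0 < μ' j := by
    intro j
    refine (integral_pos_iff_support_of_nonneg_ae ?_ (hint 0 j)).2 ?_
    · filter_upwards [hge 0 j] with ω hω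
      have h0 : 0 < X 0 j ω := (htmin j).trans_le hω
      positivity
    · have hAc : ℙ {ω | ¬ tmin j ≤ X 0 j ω} = 0 := by
        have h := hge 0 j; rwa [ae_iff] at h
      have hsub : {ω | tmin j ≤ X 0 j ω} ⊆ Function.support fun ω => (X 0 j ω)⁻¹ := by
        intro ω hω
        have h0 : 0 < X 0 j ω := (htmin j).trans_le hω
        simp only [Function.mem_support]
        positivity
      have h1 : (1 : ENNReal) ≤ ℙ (Function.support fun ω => (X 0 j ω)⁻¹) := by
        calc (1 : ENNReal) = ℙ Set.univ := measure_univ.symm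
          _ ≤ ℙ ({ω | tmin j ≤ X 0 j ω} ∪ {ω | ¬ tmin j ≤ X 0 j ω}) := by
              apply measure_mono; intro ω _
              by_cases h : tmin j ≤ X 0 j ω <;> simp [h, not_le.1]
          _ ≤ ℙ {ω | tmin j ≤ X 0 j ω} + ℙ {ω | ¬ tmin j ≤ X 0 j ω} := measure_union_le _ _
          _ = ℙ {ω | tmin j ≤ X 0 j ω} := by rw [hAc, add_zero]
          _ ≤ _ := measure_mono hsub
      exact lt_of_lt_of_le zero_lt_one h1
  -- strong law for inverses
  have hslln : ∀ j, ∀ᵐ ω ∂(ℙ : Measure Ω),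
      Tendsto (fun n : ℕ => (∑ i ∈ range n, (X i j ω)⁻¹) / n) atTop (𝓝 (μ' j)) := by
    intro j
    refine strong_law_ae_real (fun i ω => (X i j ω)⁻¹) (hint 0 j) ?_ ?_
    · intro i i' hii'
      have : IndepFun (X i j) (X i' j) ℙ :=
        hindep.indepFun (show ((i, j) : ℕ × Fin m) ≠ (i', j) by simp [hii'])
      exact this.comp measurable_inv measurable_inv
    · intro i
      exact IdentDistrib.comp ⟨(hmeas i j).aemeasurable, (hmeas 0 j).aemeasurable,
        by rw [hdist, hdist]⟩ measurable_inv
  -- the min eventually gets close to tmin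
  have hminclose : ∀ j, ∀ k : ℕ, ∀ᵐ ω ∂(ℙ : Measure Ω),
      ∃ i : ℕ, X i j ω ≤ tmin j + 1 / (k + 1) := by
    intro j k
    set c : ℝ := tmin j + 1 / (k + 1) with hc
    set q : ENNReal := D j (Set.Ioi c) with hq
    have hqn : ∀ n : ℕ, ℙ (⋂ i ∈ range n, X i j ⁻¹' Set.Ioi c) = q ^ n := by
      intro n
      have hinj : Set.InjOn (fun i : ℕ => ((i, j) : ℕ × Fin m)) (range n) := by
        intro a _ b _ hab; simpa using hab
      have := hindep.measure_inter_preimage_eq_mul (S := (range n).image (fun i => (i, j)))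
        (sets := fun _ : ℕ × Fin m => Set.Ioi c) (fun p _ => measurableSet_Ioi)
      rw [Finset.prod_image fun a ha b hb h => hinj ha hb h] at this
      have hiEq : (⋂ p ∈ (range n).image (fun i => ((i, j) : ℕ × Fin m)),
          X p.1 p.2 ⁻¹' Set.Ioi c) =
          ⋂ i ∈ range n, X i j ⁻¹' Set.Ioi c := by
        ext ω; simp
      rw [hiEq] at this
      rw [this]
      have hone : ∀ i : ℕ, ℙ (X i j ⁻¹' Set.Ioi c) = q := by
        intro i
        rw [← Measure.map_apply (hmeas i j) measurableSet_Ioi, hdist i j]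
      calc ∏ i ∈ range n, ℙ ((fun p : ℕ × Fin m => X p.1 p.2) (i, j) ⁻¹' Set.Ioi c)
          = ∏ _i ∈ range n, q := Finset.prod_congr rfl (fun i _ => hone i)
        _ = q ^ n := by rw [Finset.prod_const, card_range]
    have hq1 : q < 1 := by
      have hIic : 0 < D j (Set.Iic c) := hcdf j (1 / (k + 1)) (by positivity)
      have : IsProbabilityMeasure (D j) := hprob j
      rw [hq, ← Set.compl_Iic, measure_compl measurableSet_Iic (measure_ne_top _ _),
        measure_univ]
      exact ENNReal.sub_lt_self ENNReal.one_ne_top one_ne_zero hIic.ne'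
    have hT0 : ℙ (⋂ i : ℕ, X i j ⁻¹' Set.Ioi c) = 0 := by
      have hle : ∀ n : ℕ, ℙ (⋂ i : ℕ, X i j ⁻¹' Set.Ioi c) ≤ q ^ n := by
        intro n
        rw [← hqn n]
        exact measure_mono (fun ω hω => by
          simp only [Set.mem_iInter] at hω ⊢
          exact fun i _ => hω i)
      have htend := ENNReal.tendsto_pow_atTop_nhds_zero_of_lt_one hq1
      exact le_antisymm (ge_of_tendsto' htend hle) zero_le
    rw [ae_iff]
    convert hT0 using 2
    ext ω
    simp [not_le]
  -- combined a.e. events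
  have hminA : ∀ᵐ ω ∂(ℙ : Measure Ω), ∀ j, ∀ k : ℕ, ∃ i : ℕ,
      X i j ω ≤ tmin j + 1 / (k + 1) := by
    rw [ae_all_iff]; intro j; rw [ae_all_iff]; exact hminclose j
  have hsA : ∀ᵐ ω ∂(ℙ : Measure Ω), ∀ j,
      Tendsto (fun n : ℕ => (∑ i ∈ range n, (X i j ω)⁻¹) / n) atTop (𝓝 (μ' j)) :=
    ae_all_iff.2 hslln
  -- the limit value
  set L : ℝ := (∑ j, (μ' j)⁻¹) / (∑ j, tmin j) with hLdef
  have hmne : Nonempty (Fin m) := Fin.pos_iff_nonempty.1 hm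
  have hne : (univ : Finset (Fin m)).Nonempty := univ_nonempty
  have htsum : 0 < ∑ j, tmin j := Finset.sum_pos (fun j _ => htmin j) hne
  have hLpos : 0 < L :=
    div_pos (Finset.sum_pos (fun j _ => inv_pos.2 (hμpos j)) hne) htsum
  -- the ratio random variables
  set g : ℕ → Ω → ℝ := fun n ω => (∑ j, SCP n (fun i : Fin n => X i j ω)) /
      (∑ j, ⨅ i : Fin n, X i j ω) with hgdef
  have hrg : ∀ n, r n = ∫ ω, g n ω ∂ℙ := hr
  -- pointwise key bounds on SCP
  have hdenkey : ∀ ω, (∀ i j, tmin j ≤ X i j ω) → ∀ n : ℕ, 1 ≤ n →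
      (∑ j, tmin j) ≤ ∑ j, ⨅ i : Fin n, X i j ω := by
    intro ω h1 n hn
    have hnn : Nonempty (Fin n) := ⟨⟨0, by omega⟩⟩
    exact Finset.sum_le_sum fun j _ => le_ciInf fun i => h1 i j
  have hkey : ∀ ω, (∀ i j, tmin j ≤ X i j ω) → ∀ n : ℕ, 1 ≤ n → ∀ j,
      0 ≤ SCP n (fun i : Fin n => X i j ω) ∧
      SCP n (fun i : Fin n => X i j ω) ≤ n * ⨅ i : Fin n, X i j ω := by
    intro ω h1 n hn j
    have hnn : Nonempty (Fin n) := ⟨⟨0, by omega⟩⟩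
    have hpos : ∀ i j, 0 < X i j ω := fun i j => (htmin j).trans_le (h1 i j)
    constructor
    · refine div_nonneg (Nat.cast_nonneg n) (Finset.sum_nonneg fun k _ => ?_)
      exact le_of_lt (by have := hpos k j; positivity)
    · obtain ⟨k0, hk0⟩ := exists_eq_ciInf_of_finite (f := fun i : Fin n => X i j ω)
      have hx0 : 0 < X k0 j ω := hpos k0 j
      have hS1 : 1 / X k0 j ω ≤ ∑ k : Fin n, 1 / X k j ω := by
        refine Finset.single_le_sum (f := fun k : Fin n => 1 / X k j ω)
          (fun k _ => le_of_lt (by have := hpos k j; positivity)) (mem_univ k0)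
      calc SCP n (fun i : Fin n => X i j ω) = (n : ℝ) / ∑ k : Fin n, 1 / X k j ω := rfl
        _ ≤ (n : ℝ) / (1 / X k0 j ω) := by
            apply div_le_div_of_nonneg_left (Nat.cast_nonneg n) (by positivity) hS1
        _ = (n : ℝ) * X k0 j ω := by field_simp
        _ = (n : ℝ) * ⨅ i : Fin n, X i j ω := by rw [← hk0]
  -- a.e. convergence and bounds
  have hgood : ∀ᵐ ω ∂(ℙ : Measure Ω), Tendsto (fun n => g n ω) atTop (𝓝 L) ∧
      ∀ n : ℕ, 1 ≤ n → 0 ≤ g n ω ∧ g n ω ≤ n := by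
    filter_upwards [hgeA, hminA, hsA] with ω h1 h2 h3
    have hpos : ∀ i j, 0 < X i j ω := fun i j => (htmin j).trans_le (h1 i j)
    -- convergence of the minimum
    have hmin_t : ∀ j, Tendsto (fun n : ℕ => ⨅ i : Fin n, X i j ω) atTop (𝓝 (tmin j)) := by
      intro j
      rw [Metric.tendsto_atTop]
      intro ε hε
      obtain ⟨k, hk⟩ := exists_nat_one_div_lt hε
      obtain ⟨i0, hi0⟩ := h2 j k
      refine ⟨i0 + 1, fun n hn => ?_⟩
      have hnn : Nonempty (Fin n) := ⟨⟨0, by omega⟩⟩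
      have hlb : tmin j ≤ ⨅ i : Fin n, X i j ω := le_ciInf fun i => h1 i j
      have hub : (⨅ i : Fin n, X i j ω) ≤ X i0 j ω := by
        have := ciInf_le (f := fun i : Fin n => X i j ω)
          (Set.Finite.bddBelow (Set.finite_range _)) ⟨i0, by omega⟩
        simpa using this
      rw [Real.dist_eq, abs_of_nonneg (by linarith)]
      have hklt : (1 : ℝ) / (k + 1) < ε := hk
      linarith
    -- convergence of SCP
    have hSCP_eq : ∀ j, ∀ n : ℕ, SCP n (fun i : Fin n => X i j ω) =
        ((∑ i ∈ range n, (X i j ω)⁻¹) / n)⁻¹ := by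
      intro j n
      rw [SCP, inv_div]
      congr 1
      simp only [one_div]
      exact Fin.sum_univ_eq_sum_range (fun i => (X i j ω)⁻¹) n
    have hSCP_t : ∀ j, Tendsto (fun n : ℕ => SCP n (fun i : Fin n => X i j ω)) atTop
        (𝓝 (μ' j)⁻¹) := by
      intro j
      have := (h3 j).inv₀ (hμpos j).ne'
      refine this.congr fun n => (hSCP_eq j n).symm
    constructor
    · -- convergence of the ratio
      have hnum : Tendsto (fun n : ℕ => ∑ j, SCP n (fun i : Fin n => X i j ω)) atTop
          (𝓝 (∑ j, (μ' j)⁻¹)) := tendsto_finset_sum _ fun j _ => hSCP_t j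
      have hden : Tendsto (fun n : ℕ => ∑ j, ⨅ i : Fin n, X i j ω) atTop
          (𝓝 (∑ j, tmin j)) := tendsto_finset_sum _ fun j _ => hmin_t j
      exact hnum.div hden htsum.ne'
    · -- bounds
      intro n hn
      have hnn : Nonempty (Fin n) := ⟨⟨0, by omega⟩⟩
      set Dn : ℝ := ∑ j, ⨅ i : Fin n, X i j ω with hDn
      have hDlb : ∑ j, tmin j ≤ Dn :=
        Finset.sum_le_sum fun j _ => le_ciInf fun i => h1 i j
      have hDpos : 0 < Dn := htsum.trans_le hDlb
      have hSCPnn : ∀ j, 0 ≤ SCP n (fun i : Fin n => X i j ω) := by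
        intro j
        refine div_nonneg (Nat.cast_nonneg n) (Finset.sum_nonneg fun k _ => ?_)
        exact le_of_lt (by have := hpos k j; positivity)
      have hSCPle : ∀ j, SCP n (fun i : Fin n => X i j ω) ≤ n * ⨅ i : Fin n, X i j ω := by
        intro j
        obtain ⟨k0, hk0⟩ := exists_eq_ciInf_of_finite (f := fun i : Fin n => X i j ω)
        have hx0 : 0 < X k0 j ω := hpos k0 j
        have hS1 : 1 / X k0 j ω ≤ ∑ k : Fin n, 1 / X k j ω := by
          refine Finset.single_le_sum (f := fun k : Fin n => 1 / X k j ω)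
            (fun k _ => le_of_lt (by have := hpos k j; positivity)) (mem_univ k0)
        calc SCP n (fun i : Fin n => X i j ω) = (n : ℝ) / ∑ k : Fin n, 1 / X k j ω := rfl
          _ ≤ (n : ℝ) / (1 / X k0 j ω) := by
              apply div_le_div_of_nonneg_left (Nat.cast_nonneg n) (by positivity) hS1
          _ = (n : ℝ) * X k0 j ω := by field_simp
          _ = (n : ℝ) * ⨅ i : Fin n, X i j ω := by rw [← hk0]
      constructor
      · exact div_nonneg (Finset.sum_nonneg fun j _ => hSCPnn j) hDpos.le
      · rw [hgdef]
        simp only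
        rw [div_le_iff₀ hDpos]
        calc (∑ j, SCP n (fun i : Fin n => X i j ω))
            ≤ ∑ j, (n : ℝ) * ⨅ i : Fin n, X i j ω := Finset.sum_le_sum fun j _ => hSCPle j
          _ = (n : ℝ) * Dn := by rw [hDn, Finset.mul_sum]
  -- measurability of g n
  have hmeasg : ∀ n : ℕ, Measurable (g n) := by
    intro n
    rw [hgdef]
    simp only [SCP]
    apply Measurable.div
    · refine Finset.measurable_sum _ fun j _ => Measurable.div measurable_const ?_
      exact Finset.measurable_sum _ fun k _ => Measurable.div measurable_const (hmeas k j)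
    · exact Finset.measurable_sum _ fun j _ => Measurable.iInf fun i : Fin n => hmeas i j
  -- uniform a.e. bounds usable for every n
  have hg0 : ∀ ω, g 0 ω = 0 := by
    intro ω
    simp [hgdef, SCP]
  have hgb : ∀ᵐ ω ∂(ℙ : Measure Ω), ∀ n : ℕ, 0 ≤ g n ω ∧ ‖min (g n ω) L‖ ≤ L := by
    filter_upwards [hgood] with ω hω n
    rcases Nat.eq_zero_or_pos n with hn | hn
    · subst hn
      rw [hg0 ω]
      constructor
      · exact le_refl 0
      · rw [min_eq_left hLpos.le, norm_zero]
        exact hLpos.le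
    · obtain ⟨h0, _⟩ := hω.2 n hn
      refine ⟨h0, ?_⟩
      rw [Real.norm_eq_abs, abs_of_nonneg (le_min h0 hLpos.le)]
      exact min_le_right _ _
  -- integrability
  have hintg : ∀ n : ℕ, 1 ≤ n → Integrable (g n) ℙ := by
    intro n hn
    refine Integrable.mono' (integrable_const (n : ℝ)) (hmeasg n).aestronglyMeasurable ?_
    filter_upwards [hgood] with ω hω
    obtain ⟨h0, h1'⟩ := hω.2 n hn
    rw [Real.norm_eq_abs, abs_of_nonneg h0]
    exact h1'
  have hmeash : ∀ n : ℕ, Measurable fun ω => min (g n ω) L :=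
    fun n => (hmeasg n).min measurable_const
  have hinth : ∀ n : ℕ, Integrable (fun ω => min (g n ω) L) ℙ := by
    intro n
    refine Integrable.mono' (integrable_const L) (hmeash n).aestronglyMeasurable ?_
    filter_upwards [hgb] with ω hω using (hω n).2
  -- dominated convergence for the truncated sequence
  have hTendInt : Tendsto (fun n => ∫ ω, min (g n ω) L ∂ℙ) atTop (𝓝 L) := by
    have hlim : ∀ᵐ ω ∂(ℙ : Measure Ω),
        Tendsto (fun n => min (g n ω) L) atTop (𝓝 L) := by
      filter_upwards [hgood] with ω hω
      have := hω.1.min (tendsto_const_nhds (x := L))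
      rwa [min_self] at this
    have := tendsto_integral_of_dominated_convergence (fun _ => L)
      (fun n => (hmeash n).aestronglyMeasurable) (integrable_const L)
      (fun n => by filter_upwards [hgb] with ω hω using (hω n).2) hlim
    simpa using this
  -- compare with r
  have hle : ∀ᶠ n in atTop, (∫ ω, min (g n ω) L ∂ℙ) ≤ r n := by
    filter_upwards [eventually_ge_atTop 1] with n hn
    rw [hrg n]
    exact integral_mono (hinth n) (hintg n hn) fun ω => min_le_left _ _
  -- a uniform upper bound on r, to control the liminf
  have hrub : ∃ C : ℝ, ∀ n : ℕ, 1 ≤ n → r n ≤ C := by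
    set c : Fin m → ℝ := fun j => tmin j + 1 with hcdef
    set p : Fin m → ℝ := fun j => ((D j) (Set.Iic (c j))).toReal with hpdef
    have hp0 : ∀ j, 0 < p j := by
      intro j
      have h1 : 0 < (D j) (Set.Iic (c j)) := hcdf j 1 one_pos
      exact ENNReal.toReal_pos h1.ne' (measure_ne_top _ _)
    have hp1 : ∀ j, p j ≤ 1 := by
      intro j
      have : IsProbabilityMeasure (D j) := hprob j
      rw [hpdef]
      exact ENNReal.toReal_le_of_le_ofReal one_pos.le (by simpa using prob_le_one)
    -- Bernoulli indicators
    set B : ℕ → Fin m → Ω → ℝ :=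
      fun k j => (X k j ⁻¹' Set.Iic (c j)).indicator (fun _ => (1 : ℝ)) with hBdef
    have hBmeasSet : ∀ k j, MeasurableSet (X k j ⁻¹' Set.Iic (c j)) :=
      fun k j => (hmeas k j) measurableSet_Iic
    have hBmeas : ∀ k j, Measurable (B k j) :=
      fun k j => measurable_const.indicator (hBmeasSet k j)
    have hB01 : ∀ k j ω, B k j ω = 0 ∨ B k j ω = 1 := by
      intro k j ω
      rw [hBdef]
      by_cases h : ω ∈ X k j ⁻¹' Set.Iic (c j)
      · right; simp [Set.indicator_of_mem h]
      · left; simp [Set.indicator_of_notMem h]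
    have hBint : ∀ k j, Integrable (B k j) ℙ :=
      fun k j => (integrable_const (1 : ℝ)).indicator (hBmeasSet k j)
    have hBavg : ∀ k j, ∫ ω, B k j ω ∂ℙ = p j := by
      intro k j
      rw [hBdef]
      rw [integral_indicator_const (1 : ℝ) (hBmeasSet k j), smul_eq_mul, mul_one, measureReal_def,
        Measure.map_apply (hmeas k j) measurableSet_Iic |>.symm, hdist k j]
    -- the centered variables
    set Z : ℕ → Fin m → Ω → ℝ := fun k j ω => B k j ω - p j with hZdef
    have hZmeas : ∀ k j, Measurable (Z k j) := fun k j => (hBmeas k j).sub measurable_const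
    have hZbd : ∀ k j ω, |Z k j ω| ≤ 1 := by
      intro k j ω
      have hpa := hp0 j
      have hpb := hp1 j
      show |B k j ω - p j| ≤ 1
      rcases hB01 k j ω with h | h <;> rw [h, abs_le] <;> constructor <;> linarith
    have hZint : ∀ k j, Integrable (Z k j) ℙ := fun k j => (hBint k j).sub (integrable_const _)
    have hZavg : ∀ k j, ∫ ω, Z k j ω ∂ℙ = 0 := by
      intro k j
      have : ∫ ω, Z k j ω ∂ℙ = ∫ ω, (B k j ω - p j) ∂ℙ := rfl
      rw [this, integral_sub (hBint k j) (integrable_const _), hBavg, integral_const]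
      simp
    have hZindep : ∀ j, ∀ k l : ℕ, k ≠ l → IndepFun (Z k j) (Z l j) ℙ := by
      intro j k l hkl
      have hXind : IndepFun (X k j) (X l j) ℙ :=
        hindep.indepFun (show ((k, j) : ℕ × Fin m) ≠ (l, j) by simp [hkl])
      have hψ : Measurable fun t : ℝ => (Set.Iic (c j)).indicator (fun _ => (1 : ℝ)) t - p j :=
        (measurable_const.indicator measurableSet_Iic).sub measurable_const
      have := hXind.comp hψ hψ
      convert this using 2 <;>
        · ext ω
          simp [hZdef, hBdef, Set.indicator_apply, Function.comp, Set.mem_preimage]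
    have hZmul_int : ∀ j, ∀ k l : ℕ, Integrable (fun ω => Z k j ω * Z l j ω) ℙ := by
      intro j k l
      refine Integrable.mono' (integrable_const (1 : ℝ))
        ((hZmeas k j).mul (hZmeas l j)).aestronglyMeasurable (Eventually.of_forall fun ω => ?_)
      rw [Real.norm_eq_abs, abs_mul]
      exact mul_le_one₀ (hZbd k j ω) (abs_nonneg _) (hZbd l j ω)
    have hZcross : ∀ j, ∀ k l : ℕ, k ≠ l → ∫ ω, Z k j ω * Z l j ω ∂ℙ = 0 := by
      intro j k l hkl
      have := (hZindep j k l hkl).integral_mul_eq_mul_integral (hZint k j).aestronglyMeasurable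
        (hZint l j).aestronglyMeasurable
      have h2 : ∫ ω, Z k j ω * Z l j ω ∂ℙ = ∫ ω, (Z k j * Z l j) ω ∂ℙ := rfl
      rw [h2]
      rw [this, hZavg, hZavg, mul_zero]
    -- second moment of the sum
    have hW2 : ∀ j, ∀ n : ℕ, ∫ ω, (∑ k ∈ range n, Z k j ω) ^ 2 ∂ℙ ≤ n := by
      intro j n
      have hexp : ∀ ω, (∑ k ∈ range n, Z k j ω) ^ 2 =
          ∑ k ∈ range n, ∑ l ∈ range n, Z k j ω * Z l j ω := by
        intro ω
        rw [sq, Finset.sum_mul_sum]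
      calc ∫ ω, (∑ k ∈ range n, Z k j ω) ^ 2 ∂ℙ
          = ∫ ω, ∑ k ∈ range n, ∑ l ∈ range n, Z k j ω * Z l j ω ∂ℙ := by
            exact integral_congr_ae (Eventually.of_forall hexp)
        _ = ∑ k ∈ range n, ∑ l ∈ range n, ∫ ω, Z k j ω * Z l j ω ∂ℙ := by
            rw [integral_finset_sum _ fun k _ =>
              integrable_finset_sum _ fun l _ => hZmul_int j k l]
            exact Finset.sum_congr rfl fun k _ =>
              integral_finset_sum _ fun l _ => hZmul_int j k l
        _ = ∑ k ∈ range n, ∫ ω, Z k j ω * Z k j ω ∂ℙ := by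
            refine Finset.sum_congr rfl fun k hk => ?_
            rw [Finset.sum_eq_single k (fun l _ hlk => hZcross j k l (Ne.symm hlk))
              (fun h => absurd hk h)]
        _ ≤ ∑ _k ∈ range n, (1 : ℝ) := by
            refine Finset.sum_le_sum fun k _ => ?_
            calc ∫ ω, Z k j ω * Z k j ω ∂ℙ ≤ ∫ _ω, (1 : ℝ) ∂ℙ := by
                  refine integral_mono (hZmul_int j k k) (integrable_const _) fun ω => ?_
                  have h1 := hZbd k j ω
                  have h2 := abs_nonneg (Z k j ω)
                  have h3 := abs_mul_abs_self (Z k j ω)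
                  nlinarith
              _ = 1 := by simp
        _ = n := by simp
    -- the bad events and Chebyshev
    set A : Fin m → ℕ → Set Ω :=
      fun j n => {ω | p j * n / 2 ≤ ∑ k ∈ range n, (p j - B k j ω)} with hAdef
    have hAmeas : ∀ j n, MeasurableSet (A j n) := by
      intro j n
      exact measurableSet_le measurable_const
        (Finset.measurable_sum _ fun k _ => measurable_const.sub (hBmeas k j))
    have hcheb : ∀ j, ∀ n : ℕ, 1 ≤ n → (n : ℝ) * (ℙ (A j n)).toReal ≤ 4 / p j ^ 2 := by
      intro j n hn
      have hnpos : (0 : ℝ) < n := by exact_mod_cast hn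
      have hεpos : (0 : ℝ) < (p j * n / 2) ^ 2 := by
        have := hp0 j; positivity
      have hsub : A j n ⊆ {ω | (p j * n / 2) ^ 2 ≤ (∑ k ∈ range n, Z k j ω) ^ 2} := by
        intro ω hω
        have hW : p j * n / 2 ≤ ∑ k ∈ range n, (p j - B k j ω) := hω
        have hWZ : ∑ k ∈ range n, (p j - B k j ω) = -(∑ k ∈ range n, Z k j ω) := by
          simp only [hZdef]
          rw [Finset.sum_sub_distrib, Finset.sum_sub_distrib, neg_sub]
        have h0 : (0 : ℝ) ≤ p j * n / 2 := by have := hp0 j; positivity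
        have hpow := pow_le_pow_left₀ h0 hW 2
        rw [hWZ, neg_sq] at hpow
        exact hpow
      have hmarkov := mul_meas_ge_le_integral_of_nonneg
        (μ := (ℙ : Measure Ω)) (f := fun ω => (∑ k ∈ range n, Z k j ω) ^ 2)
        (Eventually.of_forall fun ω => sq_nonneg _)
        (by
          have hWm : Measurable fun ω => ∑ k ∈ range n, Z k j ω :=
            Finset.measurable_sum _ fun k _ => hZmeas k j
          have hW2m : Measurable fun ω => (∑ k ∈ range n, Z k j ω) ^ 2 := hWm.pow_const 2
          refine Integrable.mono' (integrable_const ((n : ℝ) ^ 2))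
            hW2m.aestronglyMeasurable
            (Eventually.of_forall fun ω => ?_)
          rw [Real.norm_eq_abs, abs_pow]
          refine pow_le_pow_left₀ (abs_nonneg _) ?_ 2
          calc |∑ k ∈ range n, Z k j ω| ≤ ∑ k ∈ range n, |Z k j ω| :=
                Finset.abs_sum_le_sum_abs _ _
            _ ≤ ∑ _k ∈ range n, (1 : ℝ) := Finset.sum_le_sum fun k _ => hZbd k j ω
            _ = n := by simp)
        ((p j * n / 2) ^ 2)
      have hA_le : (ℙ (A j n)).toReal ≤
          (ℙ {ω | (p j * n / 2) ^ 2 ≤ (∑ k ∈ range n, Z k j ω) ^ 2}).toReal :=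
        ENNReal.toReal_mono (measure_ne_top _ _) (measure_mono hsub)
      have hchain : (p j * n / 2) ^ 2 * (ℙ (A j n)).toReal ≤ n := by
        calc (p j * n / 2) ^ 2 * (ℙ (A j n)).toReal
            ≤ (p j * n / 2) ^ 2 *
              (ℙ {ω | (p j * n / 2) ^ 2 ≤ (∑ k ∈ range n, Z k j ω) ^ 2}).toReal :=
              mul_le_mul_of_nonneg_left hA_le hεpos.le
          _ ≤ ∫ ω, (∑ k ∈ range n, Z k j ω) ^ 2 ∂ℙ := hmarkov
          _ ≤ n := hW2 j n
      have hptoReal : (0 : ℝ) ≤ (ℙ (A j n)).toReal := ENNReal.toReal_nonneg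
      have hpj := hp0 j
      rw [le_div_iff₀ (by positivity : (0:ℝ) < p j ^ 2)]
      nlinarith [hchain, hnpos, hptoReal]
    -- the bound function and the integral estimate
    set K : ℝ := (∑ j, 2 * c j / p j) / (∑ j, tmin j) with hKdef
    refine ⟨K + ∑ j, 4 / p j ^ 2, fun n hn => ?_⟩
    have hnn : Nonempty (Fin n) := ⟨⟨0, by omega⟩⟩
    have hnpos : (0 : ℝ) < n := by exact_mod_cast hn
    -- pointwise bound on g n
    have hgφ : ∀ᵐ ω ∂(ℙ : Measure Ω), g n ω ≤
        K + (n : ℝ) * ∑ j, (A j n).indicator (fun _ => (1 : ℝ)) ω := by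
      filter_upwards [hgeA] with ω h1
      set Dn : ℝ := ∑ j, ⨅ i : Fin n, X i j ω with hDn
      have hDlb : ∑ j, tmin j ≤ Dn := hdenkey ω h1 n hn
      have hDpos : 0 < Dn := htsum.trans_le hDlb
      have hterm : ∀ j, SCP n (fun i : Fin n => X i j ω) / Dn ≤
          (2 * c j / p j) / (∑ j, tmin j) + (n : ℝ) * (A j n).indicator (fun _ => (1 : ℝ)) ω := by
        intro j
        by_cases hA : ω ∈ A j n
        · rw [Set.indicator_of_mem hA]
          have hSCPle := (hkey ω h1 n hn j).2
          have hinf_le : (⨅ i : Fin n, X i j ω) ≤ Dn := by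
            rw [hDn]
            refine Finset.single_le_sum (f := fun j' => ⨅ i : Fin n, X i j' ω)
              (fun j' _ => le_trans (htmin j').le (le_ciInf fun i => h1 i j')) (mem_univ j)
          have h2 : SCP n (fun i : Fin n => X i j ω) / Dn ≤ (n : ℝ) := by
            rw [div_le_iff₀ hDpos]
            calc SCP n (fun i : Fin n => X i j ω) ≤ (n : ℝ) * ⨅ i : Fin n, X i j ω := hSCPle
              _ ≤ (n : ℝ) * Dn := by
                  exact mul_le_mul_of_nonneg_left hinf_le (Nat.cast_nonneg n)
          have h3 : (0 : ℝ) ≤ 2 * c j / p j / (∑ j, tmin j) := by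
            have := hp0 j
            have hcj : 0 < c j := by rw [hcdef]; have := htmin j; simp only; linarith
            positivity
          calc SCP n (fun i : Fin n => X i j ω) / Dn ≤ (n : ℝ) := h2
            _ = 0 + (n : ℝ) * 1 := by ring
            _ ≤ _ := by gcongr
        · rw [Set.indicator_of_notMem hA, mul_zero, add_zero]
          have hNB : p j * n / 2 < ∑ k ∈ range n, B k j ω := by
            have hA' : ¬ p j * n / 2 ≤ ∑ k ∈ range n, (p j - B k j ω) := hA
            push_neg at hA'
            have hsplit : ∑ k ∈ range n, (p j - B k j ω) =
                (n : ℝ) * p j - ∑ k ∈ range n, B k j ω := by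
              rw [Finset.sum_sub_distrib, Finset.sum_const, card_range, nsmul_eq_mul]
            rw [hsplit] at hA'
            nlinarith
          have hcj : 0 < c j := by rw [hcdef]; have := htmin j; simp only; linarith
          have hsum_ge : (∑ k ∈ range n, B k j ω) / c j ≤ ∑ k : Fin n, 1 / X k j ω := by
            rw [Fin.sum_univ_eq_sum_range (fun k => 1 / X k j ω) n, Finset.sum_div]
            refine Finset.sum_le_sum fun k _ => ?_
            have hpos : 0 < X k j ω := (htmin j).trans_le (h1 k j)
            rcases hB01 k j ω with h | h
            · rw [h, zero_div]
              positivity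
            · have hmem : ω ∈ X k j ⁻¹' Set.Iic (c j) := by
                by_contra hmem
                rw [hBdef] at h
                simp [Set.indicator_of_notMem hmem] at h
              have hXle : X k j ω ≤ c j := hmem
              rw [h]
              rw [div_le_div_iff₀ hcj hpos, one_mul, one_mul]
              exact hXle
          have hsum_pos : 0 < (∑ k ∈ range n, B k j ω) / c j := by
            have h0 : (0 : ℝ) < p j * n / 2 := by have := hp0 j; positivity
            exact div_pos (h0.trans hNB) hcj
          have hSCP_le : SCP n (fun i : Fin n => X i j ω) ≤ 2 * c j / p j := by
            calc SCP n (fun i : Fin n => X i j ω)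
                = (n : ℝ) / ∑ k : Fin n, 1 / X k j ω := rfl
              _ ≤ (n : ℝ) / ((∑ k ∈ range n, B k j ω) / c j) :=
                  div_le_div_of_nonneg_left (Nat.cast_nonneg n) hsum_pos hsum_ge
              _ ≤ (n : ℝ) / ((p j * n / 2) / c j) := by
                  refine div_le_div_of_nonneg_left (Nat.cast_nonneg n) (by
                    have := hp0 j; positivity) ?_
                  exact div_le_div_of_nonneg_right hNB.le hcj.le
              _ = 2 * c j / p j := by
                  have := hp0 j
                  field_simp
          have hSCPnn := (hkey ω h1 n hn j).1
          exact div_le_div₀ (by have := hp0 j; positivity) hSCP_le htsum hDlb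
      calc g n ω = ∑ j, SCP n (fun i : Fin n => X i j ω) / Dn := by
            rw [hgdef]; exact Finset.sum_div _ _ _
        _ ≤ ∑ j, ((2 * c j / p j) / (∑ j, tmin j) +
              (n : ℝ) * (A j n).indicator (fun _ => (1 : ℝ)) ω) :=
            Finset.sum_le_sum fun j _ => hterm j
        _ = K + (n : ℝ) * ∑ j, (A j n).indicator (fun _ => (1 : ℝ)) ω := by
            rw [Finset.sum_add_distrib, ← Finset.sum_div, ← Finset.mul_sum, hKdef]
    -- integrate the bound
    have hφint : Integrable (fun ω =>
        K + (n : ℝ) * ∑ j, (A j n).indicator (fun _ => (1 : ℝ)) ω) ℙ := by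
      refine (integrable_const K).add (Integrable.const_mul ?_ _)
      exact integrable_finset_sum _ fun j _ =>
        (integrable_const (1 : ℝ)).indicator (hAmeas j n)
    have hφval : ∫ ω, (K + (n : ℝ) * ∑ j, (A j n).indicator (fun _ => (1 : ℝ)) ω) ∂ℙ =
        K + (n : ℝ) * ∑ j, (ℙ (A j n)).toReal := by
      rw [integral_add (integrable_const K) (Integrable.const_mul (integrable_finset_sum _
        fun j _ => (integrable_const (1 : ℝ)).indicator (hAmeas j n)) _)]
      rw [integral_const]
      simp only [measure_univ, ENNReal.toReal_one, probReal_univ, one_smul]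
      rw [integral_const_mul, integral_finset_sum _ fun j _ =>
        (integrable_const (1 : ℝ)).indicator (hAmeas j n)]
      congr 2
      refine Finset.sum_congr rfl fun j _ => ?_
      rw [integral_indicator_const (1 : ℝ) (hAmeas j n), smul_eq_mul, mul_one, measureReal_def]
    calc r n = ∫ ω, g n ω ∂ℙ := hrg n
      _ ≤ ∫ ω, (K + (n : ℝ) * ∑ j, (A j n).indicator (fun _ => (1 : ℝ)) ω) ∂ℙ :=
          integral_mono_ae (hintg n hn) hφint hgφ
      _ = K + (n : ℝ) * ∑ j, (ℙ (A j n)).toReal := hφval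
      _ ≤ K + ∑ j, 4 / p j ^ 2 := by
          rw [Finset.mul_sum]
          gcongr with j _
          exact hcheb j n hn
  have hLim : L ≤ liminf r atTop := by
    rw [← hTendInt.liminf_eq]
    obtain ⟨C, hC⟩ := hrub
    refine liminf_le_liminf hle ?_ ?_
    · exact hTendInt.isBoundedUnder_ge
    · refine isCoboundedUnder_ge_of_eventually_le atTop (x := C) ?_
      filter_upwards [eventually_ge_atTop 1] with n hn using hC n hn
  have hEq : (∑ j, (∫ t, 1 / t ∂(D j))⁻¹) / (∑ j, tmin j) = L := by
    rw [hLdef]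
    congr 1
    exact Finset.sum_congr rfl fun j _ => by rw [hμeq]
  rw [hEq]
  exact hLim
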